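/- For every h ≥ 1 let S_h be the complete balanced binary trie of height h over the alphabet {a, b}, i.e., the set of all strings over {a, b} of length at most h, with n = 2^{h+1} − 1 nodes; its symbol distribution is n_a = n_b = (n − 1)/2. Then n·H_0(S_h) = (n−1)·log₂(2n/(n−1)) + (n+1)·log₂(2n/(n+1)), and n − 1 ≤ n·H_0(S_h) ≤ 2n. -/

import Mathlib

lemma card_lists : ∀ (k : ℕ) (S : Finset (List (Fin 2))),
    (∀ l, l ∈ S ↔ l.length ≤ k) → S.card = 2 ^ (k + 1) - 1 := by
  intro k
  induction k with
  | zero =>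
    intro S hS
    have : S = {([] : List (Fin 2))} := by
      ext l; simp [hS, List.length_eq_zero_iff]
    simp [this]
  | succ k ih =>
    intro S hS
    set S' := S.filter (fun l => l.length ≤ k) with hS'def
    have hS' : ∀ l, l ∈ S' ↔ l.length ≤ k := by
      intro l
      simp only [hS'def, Finset.mem_filter, hS]
      exact ⟨fun h => h.2, fun h => ⟨h.trans (Nat.le_succ _), h⟩⟩
    have hcard := ih S' hS'
    have hSeq : S = insert [] ((S' ×ˢ (Finset.univ : Finset (Fin 2))).image
        fun p => p.1 ++ [p.2]) := by
      ext l
      simp only [Finset.mem_insert, Finset.mem_image, Finset.mem_product, Finset.mem_univ,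
        and_true, hS, hS', Prod.exists]
      constructor
      · intro hl
        rcases eq_or_ne l [] with rfl | hne
        · exact Or.inl rfl
        · refine Or.inr ⟨l.dropLast, l.getLast hne, ?_, List.dropLast_append_getLast hne⟩
          simp only [List.length_dropLast]; omega
      · rintro (rfl | ⟨p1, p2, hp1, rfl⟩)
        · simp
        · simp only [List.length_append, List.length_singleton]; omega
    have hinj : Set.InjOn (fun p : List (Fin 2) × Fin 2 => p.1 ++ [p.2])
        ↑(S' ×ˢ (Finset.univ : Finset (Fin 2))) := by
      intro p _ q _ hpq
      have h1 := List.append_inj_left' hpq (by simp)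
      have h2 := List.append_inj_right' hpq (by simp)
      simp only [List.cons.injEq] at h2
      exact Prod.ext h1 h2.1
    have hnotmem : ([] : List (Fin 2)) ∉ (S' ×ˢ (Finset.univ : Finset (Fin 2))).image
        (fun p => p.1 ++ [p.2]) := by
      simp only [Finset.mem_image, not_exists]
      rintro p ⟨-, h⟩
      exact List.append_ne_nil_of_right_ne_nil _ (by simp) h
    rw [hSeq, Finset.card_insert_of_notMem hnotmem, Finset.card_image_of_injOn hinj,
      Finset.card_product, hcard]
    have : 1 ≤ 2 ^ (k + 1) := Nat.one_le_two_pow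
    simp only [Finset.card_univ, Fintype.card_fin]
    ring_nf
    omega

lemma card_filter_lists (k : ℕ) (S : Finset (List (Fin 2)))
    (hS : ∀ l, l ∈ S ↔ l.length ≤ k + 1) (i : Fin 2) :
    (S.filter fun s => s.getLast? = some i).card = 2 ^ (k + 1) - 1 := by
  set S' := S.filter (fun l => l.length ≤ k) with hS'def
  have hS' : ∀ l, l ∈ S' ↔ l.length ≤ k := by
    intro l
    simp only [hS'def, Finset.mem_filter, hS]
    exact ⟨fun h => h.2, fun h => ⟨h.trans (Nat.le_succ _), h⟩⟩
  have heq : S.filter (fun s => s.getLast? = some i) = S'.image (fun l => l ++ [i]) := by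
    ext l
    simp only [Finset.mem_filter, Finset.mem_image, hS, hS']
    constructor
    · rintro ⟨hlen, hlast⟩
      have hne : l ≠ [] := by rintro rfl; simp at hlast
      have : l.getLast hne = i := by
        rw [List.getLast?_eq_getLast hne] at hlast
        exact Option.some_injective _ hlast
      refine ⟨l.dropLast, ?_, by rw [← this]; exact List.dropLast_append_getLast hne⟩
      simp only [List.length_dropLast]; omega
    · rintro ⟨l', hl', rfl⟩
      refine ⟨?_, List.getLast?_concat⟩
      simp only [List.length_append, List.length_singleton]; omega
  rw [heq, Finset.card_image_of_injective _ (fun x y h => by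
    simpa using List.append_inj_left' h rfl)]
  exact card_lists k S' hS'

/-- The 0-th order empirical entropy of a trie `S` with `n` nodes and symbol
distribution `(n_1, …, n_σ)` (where `n_i` counts the nonempty strings of `S`
ending with the `i`-th symbol):
`H₀ = ∑ᵢ (nᵢ/n)·log₂(n/nᵢ) + ((n−nᵢ)/n)·log₂(n/(n−nᵢ))`. -/
noncomputable def trieH0 (σ : ℕ) (S : Finset (List (Fin σ))) : ℝ :=
  ∑ i : Fin σ,
    (((S.filter fun s => s.getLast? = some i).card : ℝ) / (S.card : ℝ) *
        Real.logb 2 ((S.card : ℝ) / ((S.filter fun s => s.getLast? = some i).card : ℝ)) +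
      ((S.card : ℝ) - ((S.filter fun s => s.getLast? = some i).card : ℝ)) / (S.card : ℝ) *
        Real.logb 2 ((S.card : ℝ) /
          ((S.card : ℝ) - ((S.filter fun s => s.getLast? = some i).card : ℝ))))

/-- For the complete balanced binary trie `S_h` of height `h ≥ 1`, with
`n = 2^{h+1} − 1` nodes, one has
`n·H₀(S_h) = (n−1)·log₂(2n/(n−1)) + (n+1)·log₂(2n/(n+1))`, and
`n − 1 ≤ n·H₀(S_h) ≤ 2n`. -/
theorem stmt12 (h : ℕ) (hh : 1 ≤ h) (S : Finset (List (Fin 2)))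
    (hS : ∀ l : List (Fin 2), l ∈ S ↔ l.length ≤ h) :
    ((S.card : ℝ) * trieH0 2 S =
      ((S.card : ℝ) - 1) * Real.logb 2 (2 * (S.card : ℝ) / ((S.card : ℝ) - 1)) +
        ((S.card : ℝ) + 1) * Real.logb 2 (2 * (S.card : ℝ) / ((S.card : ℝ) + 1))) ∧
    (S.card : ℝ) - 1 ≤ (S.card : ℝ) * trieH0 2 S ∧
    (S.card : ℝ) * trieH0 2 S ≤ 2 * (S.card : ℝ) := by
  obtain ⟨k, rfl⟩ : ∃ k, h = k + 1 := ⟨h - 1, by omega⟩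
  have hcard : S.card = 2 ^ (k + 2) - 1 := card_lists (k + 1) S hS
  have hfil : ∀ i : Fin 2, (S.filter fun s => s.getLast? = some i).card = 2 ^ (k + 1) - 1 :=
    card_filter_lists k S hS
  have h1 : (1:ℕ) ≤ 2 ^ (k + 1) := Nat.one_le_two_pow
  have h2 : (1:ℕ) ≤ 2 ^ (k + 2) := Nat.one_le_two_pow
  -- real versions
  set m : ℝ := 2 ^ (k + 1) - 1 with hm_def
  set n : ℝ := (S.card : ℝ) with hn_def
  have hMk : (2:ℝ) ≤ 2 ^ (k + 1) := by
    calc (2:ℝ) = 2 ^ 1 := by norm_num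
    _ ≤ 2 ^ (k + 1) := by
      apply pow_le_pow_right₀ (by norm_num); omega
  have hm1 : (1:ℝ) ≤ m := by rw [hm_def]; linarith
  have hn_eq : n = 2 * m + 1 := by
    rw [hn_def, hcard, hm_def]
    push_cast [h2]
    ring
  have hfilR : ∀ i : Fin 2, ((S.filter fun s => s.getLast? = some i).card : ℝ) = m := by
    intro i; rw [hfil i, hm_def]; push_cast [h1]; ring
  have hm0 : (0:ℝ) < m := by linarith
  have hn0 : (0:ℝ) < n := by rw [hn_eq]; linarith
  have hnm0 : (0:ℝ) < n - m := by rw [hn_eq]; linarith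
  -- unfold trieH0
  have hH0 : trieH0 2 S = 2 * (m / n * Real.logb 2 (n / m) +
      (n - m) / n * Real.logb 2 (n / (n - m))) := by
    rw [trieH0, Fin.sum_univ_two, hfilR 0, hfilR 1, ← hn_def]
    ring
  -- rewrite the two target fractions
  have e1 : 2 * n / (n - 1) = n / m := by
    rw [show n - 1 = 2 * m by rw [hn_eq]; ring, mul_div_mul_left _ _ (two_ne_zero)]
  have e2 : 2 * n / (n + 1) = n / (n - m) := by
    rw [show n + 1 = 2 * (n - m) by rw [hn_eq]; ring, mul_div_mul_left _ _ (two_ne_zero)]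
  have hEq : n * trieH0 2 S =
      (n - 1) * Real.logb 2 (2 * n / (n - 1)) + (n + 1) * Real.logb 2 (2 * n / (n + 1)) := by
    rw [hH0, e1, e2, show n - 1 = 2 * m by rw [hn_eq]; ring,
      show n + 1 = 2 * (n - m) by rw [hn_eq]; ring]
    field_simp
  refine ⟨hEq, ?_, ?_⟩
  · -- lower bound
    rw [hEq, e1, e2]
    have hL1 : (1:ℝ) ≤ Real.logb 2 (n / m) := by
      have : Real.logb 2 2 ≤ Real.logb 2 (n / m) := by
        apply Real.logb_le_logb_of_le (by norm_num) (by norm_num)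
        rw [le_div_iff₀ hm0, hn_eq]; linarith
      simpa using this
    have hL2 : (0:ℝ) ≤ Real.logb 2 (n / (n - m)) := by
      apply Real.logb_nonneg (by norm_num)
      rw [le_div_iff₀ hnm0]; linarith [hn_eq, hm1]
    have hnm1 : (0:ℝ) ≤ n + 1 := by linarith
    nlinarith [mul_le_mul_of_nonneg_left hL1 (show (0:ℝ) ≤ n - 1 by rw [hn_eq]; linarith),
      mul_le_mul_of_nonneg_left hL2 hnm1]
  · -- upper bound
    rw [hEq, e1, e2]
    have hlog2 : (0:ℝ) < Real.log 2 := Real.log_pos (by norm_num)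
    -- split the logs
    have s1 : Real.log (n / m) = Real.log 2 + Real.log (n / (2 * m)) := by
      rw [show n / m = 2 * (n / (2 * m)) by field_simp,
        Real.log_mul two_ne_zero (by positivity)]
    have s2 : Real.log (n / (n - m)) = Real.log 2 + Real.log (n / (2 * (n - m))) := by
      rw [show n / (n - m) = 2 * (n / (2 * (n - m))) by field_simp,
        Real.log_mul two_ne_zero (by positivity)]
    have b1 : Real.log (n / (2 * m)) ≤ 1 / (2 * m) := by
      have := Real.log_le_sub_one_of_pos (show (0:ℝ) < n / (2 * m) by positivity)
      have hE : n / (2 * m) - 1 = 1 / (2 * m) := by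
        rw [hn_eq]; field_simp; ring
      linarith [hE ▸ this]
    have b2 : Real.log (n / (2 * (n - m))) ≤ -(1 / (2 * (n - m))) := by
      have := Real.log_le_sub_one_of_pos (show (0:ℝ) < n / (2 * (n - m)) by positivity)
      have hE : n / (2 * (n - m)) - 1 = -(1 / (2 * (n - m))) := by
        rw [hn_eq, show 2 * m + 1 - m = m + 1 by ring]
        field_simp
        ring
      linarith [hE ▸ this]
    -- main estimate in natural log
    have key : (n - 1) * Real.log (n / m) + (n + 1) * Real.log (n / (n - m)) ≤
        2 * n * Real.log 2 := by
      rw [s1, s2, show n - 1 = 2 * m by rw [hn_eq]; ring,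
        show n + 1 = 2 * (n - m) by rw [hn_eq]; ring]
      have c1 : 2 * m * Real.log (n / (2 * m)) ≤ 1 := by
        have := mul_le_mul_of_nonneg_left b1 (show (0:ℝ) ≤ 2 * m by linarith)
        calc 2 * m * Real.log (n / (2 * m)) ≤ 2 * m * (1 / (2 * m)) := this
        _ = 1 := by field_simp
      have c2 : 2 * (n - m) * Real.log (n / (2 * (n - m))) ≤ -1 := by
        have := mul_le_mul_of_nonneg_left b2 (show (0:ℝ) ≤ 2 * (n - m) by linarith)
        calc 2 * (n - m) * Real.log (n / (2 * (n - m))) ≤ 2 * (n - m) * (-(1 / (2 * (n - m)))) := this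
        _ = -1 := by field_simp
      nlinarith [hn_eq]
    -- convert to logb
    rw [Real.logb, Real.logb]
    calc (n - 1) * (Real.log (n / m) / Real.log 2) + (n + 1) * (Real.log (n / (n - m)) / Real.log 2)
        = ((n - 1) * Real.log (n / m) + (n + 1) * Real.log (n / (n - m))) / Real.log 2 := by ring
      _ ≤ 2 * n * Real.log 2 / Real.log 2 := by
          exact div_le_div_of_nonneg_right key hlog2.le
      _ = 2 * n := by field_simp
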